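/- If (V, ν) and (W, μ) are Šerstnev PN-spaces under τ_M, then the map θ : V × W → Δ⁺ defined by θ_{(x,y)} = τ_M(ν_x, μ_y) makes (V × W, θ) a Šerstnev PN-space under τ_M, and the associated quantile seminorms satisfy ‖(x,y)‖_w = ‖x‖_{V,w} + ‖y‖_{W,w} for all w ∈ (0,1). -/

import Mathlib

open Filter Topology Set

noncomputable section

/-- A distance distribution function: nondecreasing, with values in `[0,1]`,
left-continuous, `F 0 = 0` and `sup F = 1`. -/
def IsDDF (F : ℝ → ℝ) : Prop :=
  Monotone F ∧ (∀ t, F t ∈ Set.Icc (0:ℝ) 1) ∧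
  (∀ t : ℝ, Tendsto F (nhdsWithin t (Set.Iio t)) (nhds (F t))) ∧
  F 0 = 0 ∧ (⨆ t, F t) = 1

/-- A proper d.f.: `F t → 1` as `t → ∞`. -/
def IsProper (F : ℝ → ℝ) : Prop := Tendsto F atTop (nhds 1)

/-- The unit step function at `0`. -/
def H0 : ℝ → ℝ := fun t => if 0 < t then 1 else 0

/-- The quantile function `F̂(w) = sup {t | F t < w}`, valued in `EReal`. -/
noncomputable def qhat (F : ℝ → ℝ) (w : ℝ) : EReal :=
  sSup ((fun t : ℝ => (t : EReal)) '' {t | F t < w})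

/-- The triangle function `τ_M(F,G)(x) = sup_{s+t=x} min (F s) (G t)`. -/
noncomputable def tauM (F G : ℝ → ℝ) : ℝ → ℝ :=
  fun x => ⨆ s : ℝ, min (F s) (G (x - s))

/-- A Šerstnev probabilistic normed space under `τ_M`, with all `ν_x` proper. -/
structure SPN (V : Type*) [AddCommGroup V] [Module ℝ V] where
  nu : V → ℝ → ℝ
  ddf : ∀ x, IsDDF (nu x)
  proper : ∀ x, IsProper (nu x)
  nu_eq_iff : ∀ x, nu x = H0 ↔ x = 0
  nu_add : ∀ x y t, tauM (nu x) (nu y) t ≤ nu (x + y) t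
  nu_smul : ∀ a : ℝ, a ≠ 0 → ∀ x t, nu (a • x) t = nu x (t / |a|)

/-- The quantile seminorm `‖x‖_w = sup {t | ν_x t < w}`. -/
noncomputable def pnorm {V : Type*} [AddCommGroup V] [Module ℝ V]
    (S : SPN V) (x : V) (w : ℝ) : ℝ :=
  sSup {t | S.nu x t < w}

/-- The strong topology of a PN-space, generated by the balls of the seminorms `‖·‖_w`. -/
def strongTop {V : Type*} [AddCommGroup V] [Module ℝ V] (S : SPN V) : TopologicalSpace V :=
  TopologicalSpace.generateFrom
    {U | ∃ (x : V) (w r : ℝ), w ∈ Set.Ioo (0:ℝ) 1 ∧ 0 < r ∧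
      U = {y | pnorm S (y - x) w < r}}

/-- A strong Cauchy sequence. -/
def StrongCauchy {V : Type*} [AddCommGroup V] [Module ℝ V] (S : SPN V) (x : ℕ → V) : Prop :=
  ∀ t : ℝ, 0 < t → ∃ N, ∀ m ≥ N, ∀ n ≥ N, 1 - t < S.nu (x n - x m) t

/-- Strong convergence of a sequence to a point. -/
def StrongLim {V : Type*} [AddCommGroup V] [Module ℝ V] (S : SPN V) (x : ℕ → V) (p : V) : Prop :=
  ∀ t : ℝ, 0 < t → ∃ N, ∀ n ≥ N, 1 - t < S.nu (x n - p) t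

/-- Strong completeness: every strong Cauchy sequence strongly converges. -/
def StrongComplete {V : Type*} [AddCommGroup V] [Module ℝ V] (S : SPN V) : Prop :=
  ∀ x : ℕ → V, StrongCauchy S x → ∃ p, StrongLim S x p

namespace SPNaux

variable {F G F' G' : ℝ → ℝ}

lemma ddf_nonneg (hF : IsDDF F) (t : ℝ) : 0 ≤ F t := (hF.2.1 t).1
lemma ddf_le_one (hF : IsDDF F) (t : ℝ) : F t ≤ 1 := (hF.2.1 t).2
lemma ddf_mono (hF : IsDDF F) : Monotone F := hF.1
lemma ddf_zero (hF : IsDDF F) : F 0 = 0 := hF.2.2.2.1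

lemma ddf_eq_zero_of_nonpos (hF : IsDDF F) {t : ℝ} (ht : t ≤ 0) : F t = 0 :=
  le_antisymm (ddf_zero hF ▸ ddf_mono hF ht) (ddf_nonneg hF t)

lemma ddf_left_cont (hF : IsDDF F) {t ε : ℝ} (hε : 0 < ε) :
    ∃ u < t, F t - ε < F u := by
  have h := hF.2.2.1 t
  have h2 : ∀ᶠ u in nhdsWithin t (Set.Iio t), F t - ε < F u := by
    filter_upwards [h (Ioi_mem_nhds (by linarith : F t - ε < F t))] with u hu using hu
  obtain ⟨u, hu1, hu2⟩ := (h2.and self_mem_nhdsWithin).exists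
  exact ⟨u, hu2, hu1⟩

lemma H0_le_one (t : ℝ) : H0 t ≤ 1 := by unfold H0; split <;> norm_num

lemma tauM_bdd' (h1 : ∀ s, F s ≤ 1) (x : ℝ) :
    BddAbove (Set.range fun s => min (F s) (G (x - s))) :=
  ⟨1, by rintro _ ⟨s, rfl⟩; exact le_trans (min_le_left _ _) (h1 s)⟩

lemma le_tauM (h1 : ∀ s, F s ≤ 1) (x s : ℝ) :
    min (F s) (G (x - s)) ≤ tauM F G x :=
  le_ciSup (tauM_bdd' h1 x) s

lemma tauM_le_one (h1 : ∀ s, F s ≤ 1) (x : ℝ) : tauM F G x ≤ 1 :=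
  ciSup_le fun s => le_trans (min_le_left _ _) (h1 s)

lemma tauM_nonneg (hF : IsDDF F) (hG : IsDDF G) (x : ℝ) : 0 ≤ tauM F G x := by
  have h0 : (0:ℝ) = min (F 0) (G (x - 0)) := by
    rw [ddf_zero hF]; exact (min_eq_left (ddf_nonneg hG _)).symm
  calc (0:ℝ) = min (F 0) (G (x - 0)) := h0
    _ ≤ tauM F G x := le_tauM (ddf_le_one hF) x 0

lemma tauM_mono (hF : IsDDF F) (hG : IsDDF G) : Monotone (tauM F G) := fun a b hab =>
  ciSup_mono (tauM_bdd' (ddf_le_one hF) b) fun s => min_le_min le_rfl (ddf_mono hG (by linarith))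

lemma tauM_eq_zero_of_nonpos (hF : IsDDF F) (hG : IsDDF G) {t : ℝ} (ht : t ≤ 0) :
    tauM F G t = 0 := by
  refine le_antisymm (ciSup_le fun s => ?_) (tauM_nonneg hF hG t)
  rcases le_or_gt s 0 with hs | hs
  · rw [ddf_eq_zero_of_nonpos hF hs]; exact min_le_left _ _ |>.trans le_rfl
  · rw [ddf_eq_zero_of_nonpos hG (by linarith)]; exact min_le_right _ _ |>.trans le_rfl

lemma tauM_le_tauM (hF' : IsDDF F') (h1 : ∀ s, F s ≤ F' s) (h2 : ∀ s, G s ≤ G' s) (x : ℝ) :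
    tauM F G x ≤ tauM F' G' x :=
  ciSup_le fun s => le_trans (min_le_min (h1 s) (h2 _)) (le_tauM (ddf_le_one hF') x s)

lemma tauM_sSup_image (hF : IsDDF F) (hG : IsDDF G) (t : ℝ) :
    sSup (tauM F G '' Set.Iio t) = tauM F G t := by
  have hbdd : BddAbove (tauM F G '' Set.Iio t) :=
    ⟨1, by rintro _ ⟨u, _, rfl⟩; exact tauM_le_one (ddf_le_one hF) u⟩
  refine le_antisymm (csSup_le (by exact ⟨_, ⟨t - 1, by norm_num, rfl⟩⟩)
    (by rintro _ ⟨u, hu, rfl⟩; exact tauM_mono hF hG (le_of_lt hu))) ?_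
  refine le_of_forall_sub_le fun ε hε => ?_
  have h1 : tauM F G t - ε / 2 < tauM F G t := by linarith
  obtain ⟨s, hs⟩ := exists_lt_of_lt_ciSup h1
  obtain ⟨u, hu, hu2⟩ := ddf_left_cont hG (t := t - s) (half_pos hε)
  have ht' : s + u < t := by linarith
  have key : min (F s) (G (t - s)) - ε / 2 ≤ min (F s) (G u) := by
    refine le_min ?_ ?_
    · linarith [min_le_left (F s) (G (t - s))]
    · linarith [min_le_right (F s) (G (t - s))]
  have h3 : min (F s) (G u) ≤ tauM F G (s + u) := by
    have h := le_tauM (F := F) (G := G) (ddf_le_one hF) (s + u) s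
    simpa using h
  have h4 : tauM F G (s + u) ≤ sSup (tauM F G '' Set.Iio t) :=
    le_csSup hbdd ⟨s + u, ht', rfl⟩
  linarith

lemma tauM_isDDF (hF : IsDDF F) (hG : IsDDF G) (hFp : IsProper F) (hGp : IsProper G) :
    IsDDF (tauM F G) := by
  refine ⟨tauM_mono hF hG, fun t => ⟨tauM_nonneg hF hG t, tauM_le_one (ddf_le_one hF) t⟩, ?_, ?_, ?_⟩
  · intro t
    have h := (tauM_mono hF hG).tendsto_nhdsLT t
    rwa [tauM_sSup_image hF hG] at h
  · exact tauM_eq_zero_of_nonpos hF hG le_rfl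
  · -- iSup = 1, via properness
    have hp : IsProper (tauM F G) := by
      have hlow : Tendsto (fun t : ℝ => min (F (t / 2)) (G (t / 2))) atTop (nhds 1) := by
        have : Tendsto (fun t : ℝ => t / 2) atTop atTop :=
          tendsto_id.atTop_div_const (by norm_num)
        have hmin := (hFp.comp this).min (hGp.comp this)
        simpa using hmin
      refine tendsto_of_tendsto_of_tendsto_of_le_of_le hlow tendsto_const_nhds
        (fun t => ?_) (fun t => tauM_le_one (ddf_le_one hF) t)
      have : t - t / 2 = t / 2 := by ring
      calc min (F (t / 2)) (G (t / 2)) = min (F (t / 2)) (G (t - t / 2)) := by rw [this]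
        _ ≤ tauM F G t := le_tauM (ddf_le_one hF) t (t / 2)
    have h1 : Tendsto (tauM F G) atTop (nhds (⨆ t, tauM F G t)) :=
      tendsto_atTop_ciSup (tauM_mono hF hG)
        ⟨1, by rintro _ ⟨t, rfl⟩; exact tauM_le_one (ddf_le_one hF) t⟩
    exact tendsto_nhds_unique h1 hp

lemma tauM_isProper (hF : IsDDF F) (hG : IsDDF G) (hFp : IsProper F) (hGp : IsProper G) :
    IsProper (tauM F G) := by
  have hlow : Tendsto (fun t : ℝ => min (F (t / 2)) (G (t / 2))) atTop (nhds 1) := by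
    have : Tendsto (fun t : ℝ => t / 2) atTop atTop :=
      tendsto_id.atTop_div_const (by norm_num)
    have hmin := (hFp.comp this).min (hGp.comp this)
    simpa using hmin
  refine tendsto_of_tendsto_of_tendsto_of_le_of_le hlow tendsto_const_nhds
    (fun t => ?_) (fun t => tauM_le_one (ddf_le_one hF) t)
  have h2 : t - t / 2 = t / 2 := by ring
  calc min (F (t / 2)) (G (t / 2)) = min (F (t / 2)) (G (t - t / 2)) := by rw [h2]
    _ ≤ tauM F G t := le_tauM (ddf_le_one hF) t (t / 2)

lemma tauM_eq_H0_iff (hF : IsDDF F) (hG : IsDDF G) :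
    tauM F G = H0 ↔ (F = H0 ∧ G = H0) := by
  constructor
  · intro h
    have key : ∀ t : ℝ, 0 < t → F t = 1 ∧ G t = 1 := by
      intro t ht
      have h1 : tauM F G t = 1 := by rw [h]; unfold H0; simp [ht]
      constructor <;>
      · refine le_antisymm (by first | exact ddf_le_one hF t | exact ddf_le_one hG t) ?_
        refine le_of_forall_sub_le fun ε hε => ?_
        rcases le_or_gt 1 ε with hε1 | hε1
        · linarith [ddf_nonneg hF t, ddf_nonneg hG t]
        · have h2 : 1 - ε < tauM F G t := by rw [h1]; linarith
          obtain ⟨s, hs⟩ := exists_lt_of_lt_ciSup h2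
          have hFs : 1 - ε < F s := lt_of_lt_of_le hs (min_le_left _ _)
          have hGs : 1 - ε < G (t - s) := lt_of_lt_of_le hs (min_le_right _ _)
          first
          | · -- F case: need s < t, i.e. 0 < t - s
              have hts : 0 < t - s := by
                by_contra hc
                rw [ddf_eq_zero_of_nonpos hG (by linarith)] at hGs; linarith
              have : F s ≤ F t := ddf_mono hF (by linarith)
              linarith
          | · -- G case: need 0 < s is not needed; t - s ≤ t
              have hs0 : 0 < s := by
                by_contra hc
                rw [ddf_eq_zero_of_nonpos hF (by linarith)] at hFs; linarith
              have : G (t - s) ≤ G t := ddf_mono hG (by linarith)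
              linarith
    constructor <;>
    · funext t
      unfold H0
      split
      · first | exact (key t (by assumption)).1 | exact (key t (by assumption)).2
      · first
        | exact ddf_eq_zero_of_nonpos hF (by linarith [not_lt.mp (by assumption)])
        | exact ddf_eq_zero_of_nonpos hG (by linarith [not_lt.mp (by assumption)])
  · rintro ⟨hF0, hG0⟩
    subst hF0; subst hG0
    funext t
    rcases le_or_gt t 0 with ht | ht
    · rw [tauM_eq_zero_of_nonpos hF hG ht]
      unfold H0; rw [if_neg (by linarith)]
    · have hub : tauM H0 H0 t ≤ 1 := tauM_le_one (fun s => H0_le_one s) t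
      have hlb : (1:ℝ) ≤ tauM H0 H0 t := by
        have heq : min (H0 (t / 2)) (H0 (t - t / 2)) = 1 := by
          unfold H0; rw [if_pos (by linarith), if_pos (by linarith)]; simp
        calc (1:ℝ) = min (H0 (t / 2)) (H0 (t - t / 2)) := heq.symm
          _ ≤ tauM H0 H0 t := le_tauM (fun s => H0_le_one s) t (t / 2)
      have : tauM H0 H0 t = 1 := le_antisymm hub hlb
      rw [this]; unfold H0; rw [if_pos ht]

lemma tauM_comp (h1 : ∀ s, F s ≤ 1) {c : ℝ} (hc : 0 < c) (t : ℝ) :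
    tauM (fun s => F (s / c)) (fun s => G (s / c)) t = tauM F G (t / c) := by
  have hb1 : BddAbove (Set.range fun s => min (F (s / c)) (G ((t - s) / c))) :=
    ⟨1, by rintro _ ⟨s, rfl⟩; exact le_trans (min_le_left _ _) (h1 _)⟩
  refine le_antisymm (ciSup_le fun s => ?_) (ciSup_le fun s => ?_)
  · have h2 : (t - s) / c = t / c - s / c := by ring
    rw [show min (F (s / c)) (G ((t - s) / c)) = min (F (s / c)) (G (t / c - s / c)) by rw [h2]]
    exact le_tauM h1 (t / c) (s / c)
  · have h2 : c * s / c = s := by field_simp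
    have h3 : (t - c * s) / c = t / c - s := by field_simp
    calc min (F s) (G (t / c - s)) = min (F (c * s / c)) (G ((t - c * s) / c)) := by
            rw [h2, h3]
      _ ≤ ⨆ s, min (F (s / c)) (G ((t - s) / c)) := le_ciSup hb1 (c * s)

lemma tauM_exchange (hF : ∀ s, F s ≤ 1) (hF' : ∀ s, F' s ≤ 1) (hG : ∀ s, G s ≤ 1)
    (hG' : ∀ s, G' s ≤ 1) (t : ℝ) :
    tauM (tauM F G) (tauM F' G') t ≤ tauM (tauM F F') (tauM G G') t := by
  refine ciSup_le fun s => ?_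
  refine le_of_forall_sub_le fun ε hε => ?_
  have hA : min (tauM F G s) (tauM F' G' (t - s)) - ε < tauM F G s := by
    linarith [min_le_left (tauM F G s) (tauM F' G' (t - s))]
  have hB : min (tauM F G s) (tauM F' G' (t - s)) - ε < tauM F' G' (t - s) := by
    linarith [min_le_right (tauM F G s) (tauM F' G' (t - s))]
  obtain ⟨u, hu⟩ := exists_lt_of_lt_ciSup hA
  obtain ⟨v, hv⟩ := exists_lt_of_lt_ciSup hB
  have step1 : min (min (F u) (G (s - u))) (min (F' v) (G' (t - s - v)))
      = min (min (F u) (F' v)) (min (G (s - u)) (G' (t - s - v))) := min_min_min_comm _ _ _ _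
  have step2 : min (F u) (F' v) ≤ tauM F F' (u + v) := by
    have h2 : u + v - u = v := by ring
    rw [show min (F u) (F' v) = min (F u) (F' (u + v - u)) by rw [h2]]
    exact le_tauM hF (u + v) u
  have step3 : min (G (s - u)) (G' (t - s - v)) ≤ tauM G G' (t - (u + v)) := by
    have h2 : t - (u + v) - (s - u) = t - s - v := by ring
    rw [show min (G (s - u)) (G' (t - s - v)) = min (G (s - u)) (G' (t - (u + v) - (s - u)))
      by rw [h2]]
    exact le_tauM hG (t - (u + v)) (s - u)
  have step4 : min (tauM F F' (u + v)) (tauM G G' (t - (u + v)))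
      ≤ tauM (tauM F F') (tauM G G') t :=
    le_tauM (fun x => tauM_le_one hF x) t (u + v)
  have : min (tauM F G s) (tauM F' G' (t - s)) - ε
      ≤ min (min (F u) (G (s - u))) (min (F' v) (G' (t - s - v))) :=
    le_min (le_of_lt hu) (le_of_lt hv)
  calc min (tauM F G s) (tauM F' G' (t - s)) - ε
      ≤ min (min (F u) (F' v)) (min (G (s - u)) (G' (t - s - v))) := by rw [← step1]; exact this
    _ ≤ min (tauM F F' (u + v)) (tauM G G' (t - (u + v))) := min_le_min step2 step3
    _ ≤ tauM (tauM F F') (tauM G G') t := step4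

-- quantile lemmas
variable {w : ℝ}

lemma qset_zero_mem (hF : IsDDF F) (hw : 0 < w) : (0:ℝ) ∈ {t | F t < w} := by
  simp only [Set.mem_setOf_eq, ddf_zero hF]; exact hw

lemma qset_bddAbove (hF : IsDDF F) (hFp : IsProper F) (hw : w < 1) :
    BddAbove {t | F t < w} := by
  have h : ∀ᶠ t in atTop, w < F t := hFp.eventually (eventually_gt_nhds hw)
  obtain ⟨N, hN⟩ := h.exists_forall_of_atTop
  refine ⟨N, fun t ht => ?_⟩
  by_contra hc
  exact absurd (hN t (le_of_not_ge hc)) (not_lt.mpr (le_of_lt ht))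

lemma lt_qsup (hF : IsDDF F) (hw : 0 < w) {t : ℝ} (ht : t < sSup {t | F t < w}) :
    F t < w := by
  obtain ⟨t', ht'1, ht'2⟩ := exists_lt_of_lt_csSup ⟨0, qset_zero_mem hF hw⟩ ht
  exact lt_of_le_of_lt (ddf_mono hF (le_of_lt ht'2)) ht'1

lemma qsup_lt (hF : IsDDF F) (hFp : IsProper F) (hw : w < 1) {t : ℝ}
    (ht : sSup {t | F t < w} < t) : w ≤ F t := by
  by_contra hc
  exact absurd (le_csSup (qset_bddAbove hF hFp hw) (not_le.mp hc)) (not_le.mpr ht)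

lemma tauM_qsup_add (hF : IsDDF F) (hG : IsDDF G) (hFp : IsProper F) (hGp : IsProper G)
    (hw0 : 0 < w) (hw1 : w < 1) :
    sSup {t | tauM F G t < w} = sSup {t | F t < w} + sSup {t | G t < w} := by
  set a := sSup {t | F t < w} with ha
  set b := sSup {t | G t < w} with hb
  have hub : ∀ t ∈ {t | tauM F G t < w}, t ≤ a + b := by
    intro t ht
    by_contra hc
    push_neg at hc
    set δ := t - (a + b) with hδ
    have hδ0 : 0 < δ := by simp only [hδ]; linarith
    have hFw : w ≤ F (a + δ / 2) := qsup_lt hF hFp hw1 (by linarith)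
    have hGw : w ≤ G (b + δ / 2) := qsup_lt hG hGp hw1 (by linarith)
    have heq : t - (a + δ / 2) = b + δ / 2 := by simp only [hδ]; ring
    have h1 : min (F (a + δ / 2)) (G (t - (a + δ / 2))) ≤ tauM F G t :=
      le_tauM (ddf_le_one hF) t (a + δ / 2)
    rw [heq] at h1
    have h2 : w ≤ min (F (a + δ / 2)) (G (b + δ / 2)) := le_min hFw hGw
    simp only [Set.mem_setOf_eq] at ht
    linarith
  have hbdd : BddAbove {t | tauM F G t < w} := ⟨a + b, hub⟩
  refine le_antisymm (csSup_le ⟨0, by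
      simp only [Set.mem_setOf_eq, tauM_eq_zero_of_nonpos hF hG le_rfl]; exact hw0⟩ hub) ?_
  refine le_of_forall_sub_le fun ε hε => ?_
  have hFs : F (a - ε / 2) < w := lt_qsup hF hw0 (by linarith)
  have hGs : G (b - ε / 2) < w := lt_qsup hG hw0 (by linarith)
  have hmem : (a + b - ε) ∈ {t | tauM F G t < w} := by
    simp only [Set.mem_setOf_eq]
    have : tauM F G (a + b - ε) ≤ max (F (a - ε / 2)) (G (b - ε / 2)) := by
      refine ciSup_le fun r => ?_
      rcases le_or_gt r (a - ε / 2) with hr | hr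
      · exact le_trans (min_le_left _ _) (le_trans (ddf_mono hF hr) (le_max_left _ _))
      · refine le_trans (min_le_right _ _) (le_trans (ddf_mono hG ?_) (le_max_right _ _))
        linarith
    exact lt_of_le_of_lt this (max_lt hFs hGs)
  linarith [le_csSup hbdd hmem]

end SPNaux

/-- Example 3.14: the product of two Šerstnev PN-spaces is a Šerstnev PN-space under
`θ_{(x,y)} = τ_M(ν_x, μ_y)`, with `‖(x,y)‖_w = ‖x‖_{V,w} + ‖y‖_{W,w}`. -/
theorem spn_prod {V W : Type*} [AddCommGroup V] [Module ℝ V] [AddCommGroup W] [Module ℝ W]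
    (S : SPN V) (S' : SPN W) :
    ∃ Θ : SPN (V × W),
      (∀ (x : V) (y : W), Θ.nu (x, y) = tauM (S.nu x) (S'.nu y)) ∧
      (∀ (x : V) (y : W), ∀ w ∈ Set.Ioo (0:ℝ) 1,
        pnorm Θ (x, y) w = pnorm S x w + pnorm S' y w) := by
  refine ⟨{
    nu := fun p => tauM (S.nu p.1) (S'.nu p.2)
    ddf := fun p => SPNaux.tauM_isDDF (S.ddf p.1) (S'.ddf p.2) (S.proper p.1) (S'.proper p.2)
    proper := fun p =>
      SPNaux.tauM_isProper (S.ddf p.1) (S'.ddf p.2) (S.proper p.1) (S'.proper p.2)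
    nu_eq_iff := fun p => by
      rw [SPNaux.tauM_eq_H0_iff (S.ddf p.1) (S'.ddf p.2), S.nu_eq_iff, S'.nu_eq_iff,
        Prod.ext_iff]
      simp
    nu_add := fun p q t => by
      have h1 := SPNaux.tauM_exchange (F := S.nu p.1) (F' := S.nu q.1) (G := S'.nu p.2)
        (G' := S'.nu q.2) (SPNaux.ddf_le_one (S.ddf p.1)) (SPNaux.ddf_le_one (S.ddf q.1))
        (SPNaux.ddf_le_one (S'.ddf p.2)) (SPNaux.ddf_le_one (S'.ddf q.2)) t
      have h2 : tauM (tauM (S.nu p.1) (S.nu q.1)) (tauM (S'.nu p.2) (S'.nu q.2)) t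
          ≤ tauM (S.nu (p.1 + q.1)) (S'.nu (p.2 + q.2)) t :=
        SPNaux.tauM_le_tauM (S.ddf (p.1 + q.1)) (fun s => S.nu_add p.1 q.1 s)
          (fun s => S'.nu_add p.2 q.2 s) t
      simpa [Prod.fst_add, Prod.snd_add] using le_trans h1 h2
    nu_smul := fun a ha p t => by
      have hc : 0 < |a| := abs_pos.mpr ha
      have e1 : S.nu ((a • p).1) = fun s => S.nu p.1 (s / |a|) := funext fun s => by
        rw [Prod.smul_fst]; exact S.nu_smul a ha p.1 s
      have e2 : S'.nu ((a • p).2) = fun s => S'.nu p.2 (s / |a|) := funext fun s => by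
        rw [Prod.smul_snd]; exact S'.nu_smul a ha p.2 s
      show tauM (S.nu (a • p).1) (S'.nu (a • p).2) t = tauM (S.nu p.1) (S'.nu p.2) (t / |a|)
      rw [e1, e2]
      exact SPNaux.tauM_comp (SPNaux.ddf_le_one (S.ddf p.1)) hc t
  }, fun x y => rfl, fun x y w hw => ?_⟩
  show sSup {t | tauM (S.nu x) (S'.nu y) t < w} = _
  exact SPNaux.tauM_qsup_add (S.ddf x) (S'.ddf y) (S.proper x) (S'.proper y) hw.1 hw.2
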